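/- Let G be a graph on [r] with no isolated vertex and J = J(G). Then for every s ≥ 1, the maximal generating degree satisfies d(J^(2s)) = 2s·δ(J), where δ(J) is the maximum of the coordinate sums of the vertices of SP(G) = {x ∈ ℝ^r : x_i + x_j ≥ 1 for edges {i,j}, x ≥ 0}. -/

import Mathlib

/-- The polyhedron `SP(G) = {x ∈ ℝ^V : x i + x j ≥ 1 for all edges ij, x ≥ 0}`. -/
def SPgraph {V : Type*} (G : SimpleGraph V) : Set (V → ℝ) :=
  {x | (∀ i j, G.Adj i j → 1 ≤ x i + x j) ∧ ∀ i, 0 ≤ x i}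

/-- Monomial membership in the `n`-th symbolic power of the cover ideal:
`x^α ∈ J(G)⁽ⁿ⁾ = ⋂_{ij ∈ E(G)} (xᵢ,xⱼ)ⁿ` iff `α i + α j ≥ n` for every edge `ij`. -/
def memSymbCover {V : Type*} (G : SimpleGraph V) (n : ℕ) (α : V → ℕ) : Prop :=
  ∀ i j, G.Adj i j → n ≤ α i + α j

/-- `x^α` is a minimal monomial generator of `J(G)⁽ⁿ⁾`. -/
def isMinGenSymbCover {V : Type*} (G : SimpleGraph V) (n : ℕ) (α : V → ℕ) : Prop :=
  memSymbCover G n α ∧ ∀ β : V → ℕ, β ≤ α → β ≠ α → ¬ memSymbCover G n β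

namespace CoverProof

open Finset

variable {r : ℕ} (G : SimpleGraph (Fin r))

/-- Good points: feasible, in `[0,1]^r`, and every positive coordinate lies on a tight edge. -/
def Pgood (x : Fin r → ℝ) : Prop :=
  (∀ i j, G.Adj i j → 1 ≤ x i + x j) ∧ (∀ i, 0 ≤ x i) ∧ (∀ i, x i ≤ 1) ∧
  (∀ i, 0 < x i → ∃ j, G.Adj i j ∧ x i + x j = 1)

noncomputable def wgt (v : ℝ) : ℕ := if v = 0 ∨ v = 1 then 0 else if v = 1/2 then 1 else 2

open scoped Classical in
noncomputable def Tset (x : Fin r → ℝ) : Finset (Fin r × Fin r) :=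
  (univ ×ˢ univ).filter fun p => G.Adj p.1 p.2 ∧ 1 < x p.1 + x p.2

noncomputable def Mnum (x : Fin r → ℝ) : ℕ := ∑ i, wgt (x i) + (Tset G x).card

lemma wgt_le_two (v : ℝ) : wgt v ≤ 2 := by
  unfold wgt; split <;> [omega; skip]; split <;> omega

lemma wgt_eq_two {v : ℝ} (h0 : v ≠ 0) (hh : v ≠ 1/2) (h1 : v ≠ 1) : wgt v = 2 := by
  unfold wgt
  rw [if_neg (by tauto), if_neg hh]

lemma wgt_boundary {v : ℝ} (h : v = 0 ∨ v = 1) : wgt v = 0 := by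
  unfold wgt; rw [if_pos h]

lemma wgt_half : wgt (1/2 : ℝ) = 1 := by
  unfold wgt; rw [if_neg (by norm_num), if_pos rfl]

lemma pgood_mem_SP {x : Fin r → ℝ} (h : Pgood G x) : x ∈ SPgraph G := ⟨h.1, h.2.1⟩

lemma convex_SP : Convex ℝ (SPgraph G) := by
  intro x hx y hy a b ha hb hab
  constructor
  · intro i j hij
    have h1 := hx.1 i j hij
    have h2 := hy.1 i j hij
    simp only [Pi.add_apply, Pi.smul_apply, smul_eq_mul]
    nlinarith
  · intro i
    have h1 := hx.2 i
    have h2 := hy.2 i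
    simp only [Pi.add_apply, Pi.smul_apply, smul_eq_mul]
    nlinarith

/-- If `x ± u` are both in `SP(G)` and `x` is extreme, then `u = 0`. -/
lemma pert_eq_zero {x : Fin r → ℝ} (hx : x ∈ Set.extremePoints ℝ (SPgraph G))
    {u : Fin r → ℝ} (h1 : x + u ∈ SPgraph G) (h2 : x - u ∈ SPgraph G) : u = 0 := by
  have hseg : x ∈ openSegment ℝ (x + u) (x - u) := by
    refine ⟨1/2, 1/2, by norm_num, by norm_num, by norm_num, ?_⟩
    funext i; simp only [Pi.add_apply, Pi.sub_apply, Pi.smul_apply, smul_eq_mul]; ring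
  obtain ⟨hxA, hE⟩ := mem_extremePoints.mp hx
  have heq := (hE (x + u) h1 (x - u) h2 hseg).1
  have : u = (x + u) - x := by funext i; simp
  rw [this, heq]; simp


lemma exists_pert {x : Fin r → ℝ} (hx : x ∈ SPgraph G)
    (h : x ∉ Set.extremePoints ℝ (SPgraph G)) :
    ∃ u : Fin r → ℝ, u ≠ 0 ∧ x + u ∈ SPgraph G ∧ x - u ∈ SPgraph G := by
  rw [mem_extremePoints] at h
  push_neg at h
  obtain ⟨a, ha, b, hb, hseg, hne⟩ := h hx
  obtain ⟨p, q, hp, hq, hpq, heq⟩ := hseg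
  have hax : a ≠ x := by
    rintro rfl
    refine hne rfl ?_
    funext i
    have hti := congrFun heq i
    simp only [Pi.add_apply, Pi.smul_apply, smul_eq_mul] at hti
    have : q * b i = q * a i := by linear_combination hti - a i * hpq
    exact mul_left_cancel₀ (ne_of_gt hq) this
  set c : ℝ := min 1 (p/q) with hc
  have hc0 : 0 < c := lt_min one_pos (div_pos hp hq)
  have hc1 : c ≤ 1 := min_le_left _ _
  have hcpq : c ≤ p / q := min_le_right _ _
  refine ⟨fun i => c * (a i - x i), ?_, ?_, ?_⟩
  · intro hzero
    apply hax
    funext i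
    have := congrFun hzero i
    simp only [Pi.zero_apply] at this
    have : a i - x i = 0 := by
      rcases mul_eq_zero.mp this with h | h
      · exact absurd h (ne_of_gt hc0)
      · exact h
    linarith
  · -- x + c(a-x) = (1-c) x + c a ∈ SP
    constructor
    · intro i j hij
      have h1 := hx.1 i j hij
      have h2 := ha.1 i j hij
      simp only [Pi.add_apply]
      nlinarith
    · intro i
      have h1 := hx.2 i
      have h2 := ha.2 i
      simp only [Pi.add_apply]
      nlinarith
  · -- x - c(a-x): note b i = x i - (p/q)(a i - x i)
    have hbi : ∀ i, b i = x i - (p/q) * (a i - x i) := by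
      intro i
      have hti := congrFun heq i
      simp only [Pi.add_apply, Pi.smul_apply, smul_eq_mul] at hti
      have haux : q * (x i - p / q * (a i - x i)) = q * x i - p * (a i - x i) := by
        field_simp <;> ring
      have : q * b i = q * (x i - p / q * (a i - x i)) := by
        rw [haux]; linear_combination hti - x i * hpq
      exact mul_left_cancel₀ (ne_of_gt hq) this
    -- x - c(a-x) = (1 - cq/p) x + (cq/p) b, with μ := c*q/p ∈ (0,1]
    set μ : ℝ := c * q / p with hμ
    have hμ0 : 0 < μ := div_pos (mul_pos hc0 hq) hp
    have hμ1 : μ ≤ 1 := by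
      rw [hμ, div_le_one hp]
      calc c * q ≤ (p/q) * q := by nlinarith
        _ = p := by field_simp
    have hμc : μ * (p / q) = c := by
      rw [hμ]; field_simp <;> ring
    have hkey : ∀ i, x i - c * (a i - x i) = (1 - μ) * x i + μ * b i := by
      intro i
      rw [hbi i]
      linear_combination (a i - x i) * hμc
    constructor
    · intro i j hij
      have h1 := hx.1 i j hij
      have h2 := hb.1 i j hij
      simp only [Pi.sub_apply]
      rw [hkey i, hkey j]
      nlinarith
    · intro i
      have h1 := hx.2 i
      have h2 := hb.2 i
      simp only [Pi.sub_apply]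
      rw [hkey i]
      nlinarith


open scoped Classical in
lemma exists_tight {x : Fin r → ℝ} (hx : x ∈ Set.extremePoints ℝ (SPgraph G))
    (hiso : ∀ i, ∃ j, G.Adj i j) {i : Fin r} (hi : 0 < x i) :
    ∃ j, G.Adj i j ∧ x i + x j = 1 := by
  by_contra hcon
  push_neg at hcon
  have hxSP : x ∈ SPgraph G := (mem_extremePoints.mp hx).1
  have hslack : ∀ j, G.Adj i j → 1 < x i + x j := fun j hj =>
    lt_of_le_of_ne (hxSP.1 i j hj) (Ne.symm (hcon j hj))
  set N : Finset (Fin r) := univ.filter (fun j => G.Adj i j) with hN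
  have hNne : N.Nonempty := by
    obtain ⟨j, hj⟩ := hiso i
    exact ⟨j, by simp [hN, hj]⟩
  set F : Finset ℝ := N.image (fun j => x i + x j - 1) with hF
  have hFne : F.Nonempty := hNne.image _
  set m : ℝ := F.min' hFne with hm
  have hm0 : 0 < m := by
    obtain ⟨j, hjN, hjv⟩ := mem_image.mp (F.min'_mem hFne)
    have hadj : G.Adj i j := by
      have := mem_filter.mp hjN
      exact this.2
    have := hslack j hadj
    rw [← hm] at hjv
    linarith
  set ε : ℝ := min (x i) m / 2 with hε
  have hε0 : 0 < ε := div_pos (lt_min hi hm0) two_pos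
  have hεx : ε ≤ x i / 2 := by
    rw [hε]
    have := min_le_left (x i) m
    linarith
  have hεm : ε ≤ m / 2 := by
    rw [hε]
    have := min_le_right (x i) m
    linarith
  set u : Fin r → ℝ := fun k => if k = i then ε else 0 with hu
  have hu_nonneg : ∀ k, 0 ≤ u k := by
    intro k
    rw [hu]
    dsimp only
    split
    · exact le_of_lt hε0
    · exact le_refl 0
  have hu_le : ∀ k, u k ≤ ε := by
    intro k
    rw [hu]
    dsimp only
    split
    · exact le_refl ε
    · exact le_of_lt hε0
  have hkey : ∀ j, G.Adj i j → m ≤ x i + x j - 1 := by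
    intro j hj
    refine F.min'_le _ ?_
    rw [hF]
    exact mem_image.mpr ⟨j, mem_filter.mpr ⟨mem_univ j, hj⟩, rfl⟩
  have h1 : x + u ∈ SPgraph G := by
    constructor
    · intro j k hjk
      have := hxSP.1 j k hjk
      have h1' := hu_nonneg j
      have h2' := hu_nonneg k
      simp only [Pi.add_apply]
      linarith
    · intro k
      have := hxSP.2 k
      have := hu_nonneg k
      simp only [Pi.add_apply]
      linarith
  have h2 : x - u ∈ SPgraph G := by
    constructor
    · intro j k hjk
      have hbase := hxSP.1 j k hjk
      simp only [Pi.sub_apply]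
      have hne : j ≠ k := hjk.ne
      by_cases hji : j = i
      · subst hji
        have hki : ¬(k = j) := fun h => hne h.symm
        have hUj : u j = ε := by rw [hu]; simp
        have hUk : u k = 0 := by rw [hu]; simp [hki]
        have := hkey k hjk
        rw [hUj, hUk]
        linarith
      · by_cases hki : k = i
        · subst hki
          have hUk : u k = ε := by rw [hu]; simp
          have hUj : u j = 0 := by rw [hu]; simp [hji]
          have := hkey j hjk.symm
          rw [hUj, hUk]
          linarith
        · have hUj : u j = 0 := by rw [hu]; simp [hji]
          have hUk : u k = 0 := by rw [hu]; simp [hki]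
          rw [hUj, hUk]
          linarith
    · intro k
      simp only [Pi.sub_apply]
      by_cases hki : k = i
      · subst hki
        have hUk : u k = ε := by rw [hu]; simp
        rw [hUk]
        linarith
      · have hUk : u k = 0 := by rw [hu]; simp [hki]
        rw [hUk]
        linarith [hxSP.2 k]
  have hzero := pert_eq_zero G hx h1 h2
  have : u i = 0 := congrFun hzero i
  rw [hu] at this
  simp at this
  exact absurd this (ne_of_gt hε0)

lemma pgood_of_extreme {x : Fin r → ℝ} (hiso : ∀ i, ∃ j, G.Adj i j)
    (hx : x ∈ Set.extremePoints ℝ (SPgraph G)) : Pgood G x := by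
  have hxSP : x ∈ SPgraph G := (mem_extremePoints.mp hx).1
  have h4 : ∀ i, 0 < x i → ∃ j, G.Adj i j ∧ x i + x j = 1 := fun i hi =>
    exists_tight G hx hiso hi
  have h3 : ∀ i, x i ≤ 1 := by
    intro i
    by_contra hgt
    push_neg at hgt
    obtain ⟨j, hj, ht⟩ := h4 i (lt_trans one_pos hgt)
    have := hxSP.2 j
    linarith
  exact ⟨hxSP.1, hxSP.2, h3, h4⟩


/-- Moving along a direction preserving tightness and bounds preserves `Pgood`. -/
lemma pgood_move {x d : Fin r → ℝ} {t : ℝ} (hP : Pgood G x)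
    (hzero : ∀ i, x i = 0 → d i = 0)
    (htight : ∀ i j, G.Adj i j → x i + x j = 1 → d i + d j = 0)
    (h0 : ∀ i, 0 ≤ x i + t * d i)
    (h1 : ∀ i, x i + t * d i ≤ 1)
    (hslack : ∀ i j, G.Adj i j → 1 < x i + x j →
      1 ≤ (x i + t * d i) + (x j + t * d j)) :
    Pgood G (fun i => x i + t * d i) := by
  refine ⟨?_, h0, h1, ?_⟩
  · intro i j hij
    rcases lt_or_eq_of_le (hP.1 i j hij) with hlt | heqv
    · exact hslack i j hij hlt
    · have hz : t * d i + t * d j = 0 := by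
        linear_combination t * htight i j hij heqv.symm
      dsimp only
      linarith
  · intro i hpos
    dsimp only at hpos
    have hx0 : x i ≠ 0 := by
      intro h
      rw [h, hzero i h] at hpos
      simp at hpos
    have hxpos : 0 < x i := lt_of_le_of_ne (hP.2.1 i) (Ne.symm hx0)
    obtain ⟨j, hj, ht⟩ := hP.2.2.2 i hxpos
    refine ⟨j, hj, ?_⟩
    have hz : t * d i + t * d j = 0 := by
      linear_combination t * htight i j hj ht
    dsimp only
    linarith

open scoped Classical in
lemma Tset_subset {x y : Fin r → ℝ} (hP : Pgood G x)
    (ht : ∀ i j, G.Adj i j → x i + x j = 1 → y i + y j = 1) :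
    Tset G y ⊆ Tset G x := by
  intro p hp
  rw [Tset, mem_filter] at hp ⊢
  obtain ⟨hmem, hadj, hgt⟩ := hp
  refine ⟨hmem, hadj, ?_⟩
  rcases lt_or_eq_of_le (hP.1 p.1 p.2 hadj) with hlt | heqv
  · exact hlt
  · have := ht p.1 p.2 hadj heqv.symm
    rw [this] at hgt
    exact absurd hgt (lt_irrefl 1)

lemma mnum_lt {x y : Fin r → ℝ} (hw : ∀ i, wgt (y i) ≤ wgt (x i))
    (hT : Tset G y ⊆ Tset G x)
    (h : (∃ i, wgt (y i) < wgt (x i)) ∨ Tset G y ⊂ Tset G x) :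
    Mnum G y < Mnum G x := by
  unfold Mnum
  rcases h with ⟨i, hi⟩ | hss
  · have hsum : ∑ i, wgt (y i) < ∑ i, wgt (x i) :=
      Finset.sum_lt_sum (fun i _ => hw i) ⟨i, mem_univ i, hi⟩
    have hcard : (Tset G y).card ≤ (Tset G x).card := card_le_card hT
    omega
  · have hsum : ∑ i, wgt (y i) ≤ ∑ i, wgt (x i) :=
      Finset.sum_le_sum (fun i _ => hw i)
    have hcard : (Tset G y).card < (Tset G x).card := card_lt_card hss
    omega


open scoped Classical in
lemma dirmove {x e tgt : Fin r → ℝ} (hP : Pgood G x)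
    (hne : ∃ i, e i ≠ 0)
    (he : ∀ i, e i ≠ 0 → e i = 1 ∨ e i = -1)
    (hzero : ∀ i, x i = 0 → e i = 0)
    (htight : ∀ i j, G.Adj i j → x i + x j = 1 → e i + e j = 0)
    (htgt0 : ∀ i, e i ≠ 0 → 0 ≤ tgt i ∧ tgt i ≤ 1)
    (hdir : ∀ i, e i ≠ 0 → 0 < (tgt i - x i) * e i)
    (hw2 : ∀ i, e i ≠ 0 → wgt (x i) = 2)
    (hwt : ∀ i, e i ≠ 0 → wgt (tgt i) < 2) :
    ∃ t : ℝ, 0 < t ∧ Pgood G (fun i => x i + t * e i) ∧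
      Mnum G (fun i => x i + t * e i) < Mnum G x := by
  classical
  set S : Finset (Fin r) := univ.filter (fun i => e i ≠ 0) with hS
  set c : Fin r → ℝ := fun i => (tgt i - x i) * e i with hc
  set E : Finset (Fin r × Fin r) := (Tset G x).filter (fun p => e p.1 + e p.2 < 0) with hE
  set g : Fin r × Fin r → ℝ := fun p => (x p.1 + x p.2 - 1) / (-(e p.1 + e p.2)) with hg
  set F : Finset ℝ := S.image c ∪ E.image g with hF
  obtain ⟨i₀, hi₀⟩ := hne
  have hi₀S : i₀ ∈ S := by simp [hS, hi₀]
  have hFne : F.Nonempty := ⟨c i₀, mem_union_left _ (mem_image_of_mem c hi₀S)⟩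
  set t : ℝ := F.min' hFne with ht
  have hSmem : ∀ i, i ∈ S → e i ≠ 0 := by
    intro i hi
    rw [hS, mem_filter] at hi
    exact hi.2
  have hFpos : ∀ y ∈ F, 0 < y := by
    intro y hy
    rcases mem_union.mp hy with hy | hy
    · obtain ⟨i, hiS, rfl⟩ := mem_image.mp hy
      exact hdir i (hSmem i hiS)
    · obtain ⟨p, hpE, rfl⟩ := mem_image.mp hy
      rw [hE, mem_filter] at hpE
      obtain ⟨hpT, hpneg⟩ := hpE
      rw [Tset, mem_filter] at hpT
      exact div_pos (by linarith [hpT.2.2]) (by linarith)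
  have htpos : 0 < t := hFpos t (F.min'_mem hFne)
  have htc : ∀ i, e i ≠ 0 → t ≤ c i := by
    intro i hi
    exact F.min'_le _ (mem_union_left _ (mem_image_of_mem c (by simp [hS, hi])))
  have htg : ∀ p ∈ E, t ≤ g p := fun p hp =>
    F.min'_le _ (mem_union_right _ (mem_image_of_mem g hp))
  -- per-coordinate bounds
  have hbound1 : ∀ i, e i = 1 → x i + t ≤ tgt i := by
    intro i hi1
    have h := htc i (by rw [hi1]; norm_num)
    rw [hc] at h
    dsimp only at h
    rw [hi1] at h
    linarith
  have hboundm : ∀ i, e i = -1 → tgt i ≤ x i - t := by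
    intro i hi1
    have h := htc i (by rw [hi1]; norm_num)
    rw [hc] at h
    dsimp only at h
    rw [hi1] at h
    linarith
  have h0 : ∀ i, 0 ≤ x i + t * e i := by
    intro i
    by_cases hi : e i = 0
    · rw [hi]; simpa using hP.2.1 i
    · rcases he i hi with h1 | h1
      · rw [h1]; have := hP.2.1 i; linarith
      · rw [h1]
        have := hboundm i h1
        have := (htgt0 i hi).1
        linarith
  have h1b : ∀ i, x i + t * e i ≤ 1 := by
    intro i
    by_cases hi : e i = 0
    · rw [hi]; simpa using hP.2.2.1 i
    · rcases he i hi with h1 | h1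
      · rw [h1]
        have := hbound1 i h1
        have := (htgt0 i hi).2
        linarith
      · rw [h1]; have := hP.2.2.1 i; linarith
  have hslack : ∀ i j, G.Adj i j → 1 < x i + x j →
      1 ≤ (x i + t * e i) + (x j + t * e j) := by
    intro i j hij hv
    by_cases hsign : 0 ≤ e i + e j
    · nlinarith
    · push_neg at hsign
      have hpE : (i, j) ∈ E := by
        rw [hE, mem_filter, Tset, mem_filter]
        exact ⟨⟨mem_product.mpr ⟨mem_univ i, mem_univ j⟩, hij, hv⟩, hsign⟩
      have := htg (i, j) hpE
      rw [hg] at this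
      have hk : 0 < -(e i + e j) := by linarith
      rw [le_div_iff₀ hk] at this
      nlinarith
  have hPy := pgood_move G hP hzero htight h0 h1b hslack
  refine ⟨t, htpos, hPy, ?_⟩
  have hTss : Tset G (fun i => x i + t * e i) ⊆ Tset G x := by
    refine Tset_subset G hP ?_
    intro i j hij hv
    have hz : t * e i + t * e j = 0 := by
      linear_combination t * htight i j hij hv
    linarith
  have hw : ∀ i, wgt (x i + t * e i) ≤ wgt (x i) := by
    intro i
    by_cases hi : e i = 0
    · rw [hi]; simp
    · rw [hw2 i hi]; exact wgt_le_two _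
  refine mnum_lt G hw hTss ?_
  rcases mem_union.mp (F.min'_mem hFne) with hmem | hmem
  · obtain ⟨i, hiS, hci⟩ := mem_image.mp hmem
    have hie := hSmem i hiS
    left
    refine ⟨i, ?_⟩
    have he2 : e i * e i = 1 := by
      rcases he i hie with h1 | h1 <;> rw [h1] <;> norm_num
    have hval : x i + t * e i = tgt i := by
      rw [← ht] at hci
      rw [← hci]
      simp only [hc]
      linear_combination (tgt i - x i) * he2
    rw [hval, hw2 i hie]
    exact hwt i hie
  · obtain ⟨p, hpE, hgp⟩ := mem_image.mp hmem
    right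
    rw [ssubset_iff_of_subset hTss]
    refine ⟨p, ?_, ?_⟩
    · rw [hE, mem_filter] at hpE
      exact hpE.1
    · rw [hE, mem_filter] at hpE
      obtain ⟨hpT, hpneg⟩ := hpE
      rw [Tset, mem_filter] at hpT ⊢
      rintro ⟨-, -, hgt⟩
      have hk : -(e p.1 + e p.2) ≠ 0 := by linarith
      have ht' : t * (-(e p.1 + e p.2)) = x p.1 + x p.2 - 1 := by
        rw [← ht] at hgp
        rw [← hgp, hg]
        exact div_mul_cancel₀ _ hk
      have ht2 : t * e p.1 + t * e p.2 = -(x p.1 + x p.2 - 1) := by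
        linear_combination -ht'
      linarith


open scoped Classical in
lemma step1 {x : Fin r → ℝ} (hP : Pgood G x)
    (hA : ∃ i, ¬(x i = 0 ∨ x i = 1/2 ∨ x i = 1)) :
    ∃ y z : Fin r → ℝ, Pgood G y ∧ Pgood G z ∧ Mnum G y < Mnum G x ∧ Mnum G z < Mnum G x ∧
      x ∈ openSegment ℝ y z ∧ y ≠ x ∧ z ≠ x := by
  classical
  have classify : ∀ i, x i = 0 ∨ x i = 1/2 ∨ x i = 1 ∨ (0 < x i ∧ x i < 1/2) ∨
      (1/2 < x i ∧ x i < 1) := by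
    intro i
    have hb0 := hP.2.1 i
    have hb1 := hP.2.2.1 i
    rcases lt_trichotomy (x i) (1/2) with h | h | h
    · rcases eq_or_lt_of_le hb0 with h0 | h0
      · exact Or.inl h0.symm
      · exact Or.inr (Or.inr (Or.inr (Or.inl ⟨h0, h⟩)))
    · exact Or.inr (Or.inl h)
    · rcases eq_or_lt_of_le hb1 with h1 | h1
      · exact Or.inr (Or.inr (Or.inl h1))
      · exact Or.inr (Or.inr (Or.inr (Or.inr ⟨h, h1⟩)))
  set d : Fin r → ℝ := fun i =>
    if 0 < x i ∧ x i < 1/2 then -1 else if 1/2 < x i ∧ x i < 1 then 1 else 0 with hd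
  have hd_neg : ∀ i, 0 < x i ∧ x i < 1/2 → d i = -1 := by
    intro i hi
    simp only [hd]
    rw [if_pos hi]
  have hd_pos : ∀ i, 1/2 < x i ∧ x i < 1 → d i = 1 := by
    intro i hi
    have hn : ¬(0 < x i ∧ x i < 1/2) := by
      rintro ⟨-, h2⟩
      linarith [hi.1]
    simp only [hd]
    rw [if_neg hn, if_pos hi]
  have hd_zero : ∀ i, x i = 0 ∨ x i = 1/2 ∨ x i = 1 → d i = 0 := by
    intro i hi
    have hn1 : ¬(0 < x i ∧ x i < 1/2) := by
      rintro ⟨ha, hb⟩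
      rcases hi with h | h | h <;> linarith
    have hn2 : ¬(1/2 < x i ∧ x i < 1) := by
      rintro ⟨ha, hb⟩
      rcases hi with h | h | h <;> linarith
    simp only [hd]
    rw [if_neg hn1, if_neg hn2]
  have hdval : ∀ i, d i ≠ 0 → d i = 1 ∨ d i = -1 := by
    intro i hi
    rcases classify i with h | h | h | h | h
    · exact absurd (hd_zero i (Or.inl h)) hi
    · exact absurd (hd_zero i (Or.inr (Or.inl h))) hi
    · exact absurd (hd_zero i (Or.inr (Or.inr h))) hi
    · exact Or.inr (hd_neg i h)
    · exact Or.inl (hd_pos i h)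
  have htightd : ∀ i j, G.Adj i j → x i + x j = 1 → d i + d j = 0 := by
    intro i j hij hsum
    have hb0i := hP.2.1 i
    have hb1i := hP.2.2.1 i
    have hb0j := hP.2.1 j
    have hb1j := hP.2.2.1 j
    rcases classify i with h | h | h | h | h
    · rw [hd_zero i (Or.inl h), hd_zero j (Or.inr (Or.inr (by linarith)))]
      norm_num
    · rw [hd_zero i (Or.inr (Or.inl h)), hd_zero j (Or.inr (Or.inl (by linarith)))]
      norm_num
    · rw [hd_zero i (Or.inr (Or.inr h)), hd_zero j (Or.inl (by linarith))]
      norm_num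
    · rw [hd_neg i h, hd_pos j ⟨by linarith [h.2], by linarith [h.1]⟩]
      norm_num
    · rw [hd_pos i h, hd_neg j ⟨by linarith [h.2], by linarith [h.1]⟩]
      norm_num
  obtain ⟨i₀, hi₀⟩ := hA
  have hi₀' : (0 < x i₀ ∧ x i₀ < 1/2) ∨ (1/2 < x i₀ ∧ x i₀ < 1) := by
    rcases classify i₀ with h | h | h | h | h
    · exact absurd (Or.inl h) hi₀
    · exact absurd (Or.inr (Or.inl h)) hi₀
    · exact absurd (Or.inr (Or.inr h)) hi₀
    · exact Or.inl h
    · exact Or.inr h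
  have hdi₀ : d i₀ ≠ 0 := by
    rcases hi₀' with h | h
    · rw [hd_neg i₀ h]; norm_num
    · rw [hd_pos i₀ h]; norm_num
  have hdsupp : ∀ i, d i ≠ 0 → ¬(x i = 0 ∨ x i = 1/2 ∨ x i = 1) := by
    intro i hi hcon
    exact hi (hd_zero i hcon)
  have hw2d : ∀ i, d i ≠ 0 → wgt (x i) = 2 := by
    intro i hi
    have := hdsupp i hi
    push_neg at this
    exact wgt_eq_two this.1 this.2.1 this.2.2
  -- plus direction
  set tgtp : Fin r → ℝ := fun i => if 0 < x i ∧ x i < 1/2 then 0 else 1 with htgtp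
  obtain ⟨tp, htp0, hPyp, hMyp⟩ := dirmove G hP ⟨i₀, hdi₀⟩ hdval
    (fun i hi => hd_zero i (Or.inl hi)) htightd
    (by
      intro i _
      show 0 ≤ (if 0 < x i ∧ x i < 1/2 then (0:ℝ) else 1) ∧ (if 0 < x i ∧ x i < 1/2 then (0:ℝ) else 1) ≤ 1
      split <;> norm_num)
    (by
      intro i hi
      show 0 < ((if 0 < x i ∧ x i < 1/2 then (0:ℝ) else 1) - x i) * d i
      by_cases hcond : 0 < x i ∧ x i < 1/2
      · rw [if_pos hcond, hd_neg i hcond]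
        nlinarith [hcond.1]
      · rw [if_neg hcond]
        have hcond2 : 1/2 < x i ∧ x i < 1 := by
          rcases classify i with h | h | h | h | h
          · exact absurd (hd_zero i (Or.inl h)) hi
          · exact absurd (hd_zero i (Or.inr (Or.inl h))) hi
          · exact absurd (hd_zero i (Or.inr (Or.inr h))) hi
          · exact absurd h hcond
          · exact h
        rw [hd_pos i hcond2]
        nlinarith [hcond2.2])
    hw2d
    (by
      intro i _
      show wgt (if 0 < x i ∧ x i < 1/2 then (0:ℝ) else 1) < 2
      split
      · rw [wgt_boundary (Or.inl rfl)]; norm_num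
      · rw [wgt_boundary (Or.inr rfl)]; norm_num)
  -- minus direction
  have hdvalm : ∀ i, -(d i) ≠ 0 → -(d i) = 1 ∨ -(d i) = -1 := by
    intro i hi
    have : d i ≠ 0 := fun h => hi (by rw [h]; norm_num)
    rcases hdval i this with h | h <;> rw [h] <;> norm_num
  obtain ⟨tm, htm0, hPym, hMym⟩ := dirmove G (e := fun i => -(d i)) (tgt := fun _ => 1/2) hP
    ⟨i₀, by simpa using hdi₀⟩ hdvalm
    (fun i hi => by show -(d i) = 0; rw [hd_zero i (Or.inl hi)]; norm_num)
    (fun i j hij hsum => by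
      show -(d i) + -(d j) = 0
      have := htightd i j hij hsum
      linarith)
    (by intro i _; constructor <;> norm_num)
    (by
      intro i hi
      have hdi : d i ≠ 0 := fun h => hi (by show -(d i) = 0; rw [h]; norm_num)
      show 0 < ((1:ℝ)/2 - x i) * -(d i)
      rcases classify i with h | h | h | h | h
      · exact absurd (hd_zero i (Or.inl h)) hdi
      · exact absurd (hd_zero i (Or.inr (Or.inl h))) hdi
      · exact absurd (hd_zero i (Or.inr (Or.inr h))) hdi
      · rw [hd_neg i h]
        nlinarith [h.2]
      · rw [hd_pos i h]
        nlinarith [h.1])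
    (by
      intro i hi
      have hdi : d i ≠ 0 := fun h => hi (by show -(d i) = 0; rw [h]; norm_num)
      exact hw2d i hdi)
    (by
      intro i _
      show wgt ((1:ℝ)/2) < 2
      rw [wgt_half]
      norm_num)
  refine ⟨fun i => x i + tp * d i, fun i => x i + tm * -(d i), hPyp, hPym, hMyp, hMym, ?_, ?_, ?_⟩
  · refine ⟨tm / (tp + tm), tp / (tp + tm), by positivity, by positivity, ?_, ?_⟩
    · field_simp
      ring
    · funext i
      simp only [Pi.add_apply, Pi.smul_apply, smul_eq_mul]
      field_simp
      ring
  · intro hcon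
    have := congrFun hcon i₀
    have : tp * d i₀ = 0 := by linarith
    rcases mul_eq_zero.mp this with h | h
    · exact absurd h (ne_of_gt htp0)
    · exact hdi₀ h
  · intro hcon
    have := congrFun hcon i₀
    have : tm * -(d i₀) = 0 := by linarith
    rcases mul_eq_zero.mp this with h | h
    · exact absurd h (ne_of_gt htm0)
    · exact hdi₀ (by simpa using h)


open scoped Classical in
lemma step2 {x : Fin r → ℝ} (hP : Pgood G x)
    (hhalf : ∀ i, x i = 0 ∨ x i = 1/2 ∨ x i = 1)
    (hnex : x ∉ Set.extremePoints ℝ (SPgraph G)) :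
    ∃ y z : Fin r → ℝ, Pgood G y ∧ Pgood G z ∧ Mnum G y < Mnum G x ∧ Mnum G z < Mnum G x ∧
      x ∈ openSegment ℝ y z := by
  classical
  obtain ⟨u, hu0, hup, hum⟩ := exists_pert G (pgood_mem_SP G hP) hnex
  have huz : ∀ i, x i = 0 → u i = 0 := by
    intro i hi
    have h1 := hup.2 i
    have h2 := hum.2 i
    simp only [Pi.add_apply, Pi.sub_apply] at h1 h2
    rw [hi] at h1 h2
    linarith
  have hutight : ∀ i j, G.Adj i j → x i + x j = 1 → u i + u j = 0 := by
    intro i j hij hsum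
    have h1 := hup.1 i j hij
    have h2 := hum.1 i j hij
    simp only [Pi.add_apply, Pi.sub_apply] at h1 h2
    linarith
  have hu1 : ∀ i, x i = 1 → u i = 0 := by
    intro i hi
    obtain ⟨j, hj, ht⟩ := hP.2.2.2 i (by rw [hi]; norm_num)
    have hxj : x j = 0 := by rw [hi] at ht; linarith
    have h1 := huz j hxj
    have h2 := hutight i j hj ht
    linarith
  obtain ⟨i₀, hi₀⟩ : ∃ i, u i ≠ 0 := by
    by_contra hcon
    push_neg at hcon
    exact hu0 (funext fun i => hcon i)
  set Fm : Finset ℝ := univ.image (fun i => |u i|) with hFm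
  have hFmne : Fm.Nonempty := ⟨|u i₀|, mem_image_of_mem _ (mem_univ i₀)⟩
  set m : ℝ := Fm.max' hFmne with hm
  have hub : ∀ i, |u i| ≤ m := fun i => Fm.le_max' _ (mem_image_of_mem _ (mem_univ i))
  have hm0 : 0 < m := lt_of_lt_of_le (abs_pos.mpr hi₀) (hub i₀)
  set d : Fin r → ℝ := fun i => if |u i| = m then u i / m else 0 with hd
  have hd_of : ∀ i, |u i| = m → d i = u i / m := by
    intro i hi
    simp only [hd]
    rw [if_pos hi]
  have hd_not : ∀ i, |u i| ≠ m → d i = 0 := by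
    intro i hi
    simp only [hd]
    rw [if_neg hi]
  have hd_cases : ∀ i, d i ≠ 0 → d i = 1 ∨ d i = -1 := by
    intro i hi
    have habs : |u i| = m := by
      by_contra hcon
      exact hi (hd_not i hcon)
    have hde := hd_of i habs
    rcases abs_cases (u i) with ⟨h1, _⟩ | ⟨h1, _⟩
    · left
      rw [hde, h1.symm.trans habs]
      exact div_self (ne_of_gt hm0)
    · right
      rw [h1] at habs
      rw [hde, show u i = -m by linarith, neg_div, div_self (ne_of_gt hm0)]
  have hd_une : ∀ i, d i ≠ 0 → u i ≠ 0 := by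
    intro i hi hcon
    apply hi
    by_cases habs : |u i| = m
    · rw [hd_of i habs, hcon]
      simp
    · exact hd_not i habs
  have hd_half : ∀ i, d i ≠ 0 → x i = 1/2 := by
    intro i hi
    rcases hhalf i with h | h | h
    · exact absurd (huz i h) (hd_une i hi)
    · exact h
    · exact absurd (hu1 i h) (hd_une i hi)
  have hd_zero : ∀ i, x i = 0 → d i = 0 := by
    intro i hi
    have : u i = 0 := huz i hi
    apply hd_not
    rw [this]
    simp
    exact fun h => absurd h.symm (ne_of_gt hm0)
  have hd_tight : ∀ i j, G.Adj i j → x i + x j = 1 → d i + d j = 0 := by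
    intro i j hij hsum
    have huij := hutight i j hij hsum
    have habs : |u i| = |u j| := by
      rw [show u i = -(u j) by linarith]
      exact abs_neg _
    by_cases hcond : |u i| = m
    · rw [hd_of i hcond, hd_of j (habs ▸ hcond)]
      field_simp
      linarith
    · rw [hd_not i hcond, hd_not j (fun h => hcond (habs.trans h))]
      norm_num
  obtain ⟨i₁, hi₁⟩ : ∃ i, d i ≠ 0 := by
    obtain ⟨i, -, habs⟩ := mem_image.mp (Fm.max'_mem hFmne)
    refine ⟨i, ?_⟩
    rw [hd_of i habs]
    have : u i ≠ 0 := by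
      intro h
      rw [h] at habs
      simp at habs
      exact (ne_of_gt hm0) habs.symm
    exact div_ne_zero this (ne_of_gt hm0)
  -- main: for any direction satisfying the properties
  have main : ∀ e : Fin r → ℝ, (∀ i, e i ≠ 0 → e i = 1 ∨ e i = -1) →
      (∀ i, e i ≠ 0 → x i = 1/2) → (∀ i, x i = 0 → e i = 0) →
      (∀ i j, G.Adj i j → x i + x j = 1 → e i + e j = 0) → (∃ i, e i ≠ 0) →
      Pgood G (fun i => x i + (1/2) * e i) ∧
        Mnum G (fun i => x i + (1/2) * e i) < Mnum G x := by
    intro e hec heh hez het ⟨j₁, hj₁⟩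
    have h0 : ∀ i, 0 ≤ x i + (1/2) * e i := by
      intro i
      by_cases hi : e i = 0
      · rw [hi]
        have := hP.2.1 i
        linarith
      · have hx := heh i hi
        rcases hec i hi with h | h <;> rw [h, hx] <;> norm_num
    have h1 : ∀ i, x i + (1/2) * e i ≤ 1 := by
      intro i
      by_cases hi : e i = 0
      · rw [hi]
        have := hP.2.2.1 i
        linarith
      · have hx := heh i hi
        rcases hec i hi with h | h <;> rw [h, hx] <;> norm_num
    have hslack : ∀ i j, G.Adj i j → 1 < x i + x j →
        1 ≤ (x i + (1/2) * e i) + (x j + (1/2) * e j) := by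
      intro i j hij hv
      by_cases hi : e i = 0
      · by_cases hj : e j = 0
        · rw [hi, hj]
          linarith
        · have hxj := heh j hj
          have hxi1 : x i = 1 := by
            rcases hhalf i with h | h | h
            · rw [h, hxj] at hv
              norm_num at hv
            · rw [h, hxj] at hv
              norm_num at hv
            · exact h
          rcases hec j hj with h | h <;> rw [hi, h, hxi1, hxj] <;> norm_num
      · have hxi := heh i hi
        by_cases hj : e j = 0
        · have hxj1 : x j = 1 := by
            rcases hhalf j with h | h | h
            · rw [h, hxi] at hv
              norm_num at hv
            · rw [h, hxi] at hv
              norm_num at hv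
            · exact h
          rcases hec i hi with h | h <;> rw [hj, h, hxi, hxj1] <;> norm_num
        · have hxj := heh j hj
          rw [hxi, hxj] at hv
          norm_num at hv
    have hPy := pgood_move G hP hez het h0 h1 hslack
    refine ⟨hPy, ?_⟩
    have hTss : Tset G (fun i => x i + (1/2) * e i) ⊆ Tset G x := by
      refine Tset_subset G hP ?_
      intro i j hij hv
      have := het i j hij hv
      linarith
    have hwy : ∀ i, wgt (x i + (1/2) * e i) ≤ wgt (x i) := by
      intro i
      by_cases hi : e i = 0
      · rw [hi]
        norm_num
      · have hx := heh i hi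
        rcases hec i hi with h | h <;> rw [h, hx]
        · rw [show (1:ℝ)/2 + 1/2 * 1 = 1 by norm_num, wgt_boundary (Or.inr rfl), wgt_half]
          norm_num
        · rw [show (1:ℝ)/2 + 1/2 * (-1) = 0 by norm_num, wgt_boundary (Or.inl rfl), wgt_half]
          norm_num
    refine mnum_lt G hwy hTss (Or.inl ⟨j₁, ?_⟩)
    have hx := heh j₁ hj₁
    rcases hec j₁ hj₁ with h | h <;> rw [h, hx]
    · rw [show (1:ℝ)/2 + 1/2 * 1 = 1 by norm_num, wgt_boundary (Or.inr rfl), wgt_half]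
      norm_num
    · rw [show (1:ℝ)/2 + 1/2 * (-1) = 0 by norm_num, wgt_boundary (Or.inl rfl), wgt_half]
      norm_num
  obtain ⟨hPy, hMy⟩ := main d hd_cases hd_half hd_zero hd_tight ⟨i₁, hi₁⟩
  obtain ⟨hPz, hMz⟩ := main (fun i => -(d i))
    (by
      intro i hi
      have hdi : d i ≠ 0 := by simpa using hi
      show -(d i) = 1 ∨ -(d i) = -1
      rcases hd_cases i hdi with h | h <;> rw [h] <;> norm_num)
    (by
      intro i hi
      have : d i ≠ 0 := by simpa using hi
      exact hd_half i this)
    (fun i hi => by show -(d i) = 0; rw [hd_zero i hi]; norm_num)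
    (fun i j hij hsum => by
      have := hd_tight i j hij hsum
      show -(d i) + -(d j) = 0
      linarith)
    ⟨i₁, by simpa using hi₁⟩
  refine ⟨_, _, hPy, hPz, hMy, hMz, 1/2, 1/2, by norm_num, by norm_num, by norm_num, ?_⟩
  funext i
  simp only [Pi.add_apply, Pi.smul_apply, smul_eq_mul]
  ring


lemma seg_sum_le {x y z : Fin r → ℝ} {δ : ℝ} (hy : ∑ i, y i ≤ δ) (hz : ∑ i, z i ≤ δ)
    (hseg : x ∈ openSegment ℝ y z) : ∑ i, x i ≤ δ := by
  obtain ⟨a, b, ha, hb, hab, heq⟩ := hseg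
  have hx : ∀ i, x i = a * y i + b * z i := by
    intro i
    have := congrFun heq i
    simpa [Pi.add_apply, Pi.smul_apply, smul_eq_mul] using this.symm
  calc ∑ i, x i = ∑ i, (a * y i + b * z i) := by
        exact Finset.sum_congr rfl (fun i _ => hx i)
    _ = a * ∑ i, y i + b * ∑ i, z i := by
        rw [Finset.sum_add_distrib, Finset.mul_sum, Finset.mul_sum]
    _ ≤ a * δ + b * δ := by
        have h1 := mul_le_mul_of_nonneg_left hy (le_of_lt ha)
        have h2 := mul_le_mul_of_nonneg_left hz (le_of_lt hb)
        linarith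
    _ = δ := by rw [← add_mul, hab, one_mul]

lemma key {δ : ℝ} (hδub : ∀ v ∈ Set.extremePoints ℝ (SPgraph G), ∑ i, v i ≤ δ) :
    ∀ n (x : Fin r → ℝ), Mnum G x ≤ n → Pgood G x → ∑ i, x i ≤ δ := by
  intro n
  induction n with
  | zero =>
    intro x hm hP
    by_cases hx : x ∈ Set.extremePoints ℝ (SPgraph G)
    · exact hδub x hx
    · by_cases hA : ∃ i, ¬(x i = 0 ∨ x i = 1/2 ∨ x i = 1)
      · obtain ⟨y, z, -, -, hMy, -, -, -, -⟩ := step1 G hP hA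
        omega
      · push_neg at hA
        obtain ⟨y, z, -, -, hMy, -, -⟩ := step2 G hP hA hx
        omega
  | succ n ih =>
    intro x hm hP
    by_cases hx : x ∈ Set.extremePoints ℝ (SPgraph G)
    · exact hδub x hx
    · by_cases hA : ∃ i, ¬(x i = 0 ∨ x i = 1/2 ∨ x i = 1)
      · obtain ⟨y, z, hPy, hPz, hMy, hMz, hseg, -, -⟩ := step1 G hP hA
        exact seg_sum_le (ih y (by omega) hPy) (ih z (by omega) hPz) hseg
      · push_neg at hA
        obtain ⟨y, z, hPy, hPz, hMy, hMz, hseg⟩ := step2 G hP hA hx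
        exact seg_sum_le (ih y (by omega) hPy) (ih z (by omega) hPz) hseg


lemma upper {δ : ℝ} (hδub : ∀ v ∈ Set.extremePoints ℝ (SPgraph G), ∑ i, v i ≤ δ)
    {s : ℕ} (hs : 1 ≤ s) {α : Fin r → ℕ} (hα : isMinGenSymbCover G (2*s) α) :
    ∑ i, (α i : ℝ) ≤ 2 * (s:ℝ) * δ := by
  have hs1 : (1:ℝ) ≤ (s:ℝ) := by exact_mod_cast hs
  have hn : (0:ℝ) < 2 * (s:ℝ) := by linarith
  set x : Fin r → ℝ := fun i => (α i : ℝ) / (2*(s:ℝ)) with hx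
  have htight : ∀ i, 0 < α i → ∃ k, G.Adj i k ∧ α i + α k = 2*s := by
    intro i hi
    set β : Fin r → ℕ := fun j => if j = i then α i - 1 else α j with hβ
    have hβi : β i = α i - 1 := by simp [hβ]
    have hβne : ∀ j, j ≠ i → β j = α j := by
      intro j hj
      simp [hβ, hj]
    have hle : β ≤ α := by
      intro j
      by_cases hj : j = i
      · subst hj
        rw [hβi]
        exact Nat.sub_le _ _
      · rw [hβne j hj]
    have hne : β ≠ α := by
      intro hcon
      have := congrFun hcon i
      rw [hβi] at this
      omega
    have hnm := hα.2 β hle hne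
    rw [memSymbCover] at hnm
    push_neg at hnm
    obtain ⟨j, k, hjk, hlt0⟩ := hnm
    have hlt : β j + β k < 2*s := hlt0
    have hjk_ne : j ≠ k := hjk.ne
    have hmem := hα.1 j k hjk
    by_cases hji : j = i
    · subst hji
      refine ⟨k, hjk, ?_⟩
      rw [hβi, hβne k (by intro h; exact hjk_ne h.symm)] at hlt
      omega
    · by_cases hki : k = i
      · subst hki
        refine ⟨j, hjk.symm, ?_⟩
        rw [hβne j hji, hβi] at hlt
        omega
      · rw [hβne j hji, hβne k hki] at hlt
        omega
  have hcast : ∀ i, 0 < α i → (α i : ℝ) ≤ 2*(s:ℝ) := by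
    intro i hi
    obtain ⟨k, hk, he⟩ := htight i hi
    have : α i ≤ 2*s := by omega
    calc (α i : ℝ) ≤ ((2*s : ℕ) : ℝ) := by exact_mod_cast this
      _ = 2*(s:ℝ) := by push_cast; ring
  have hPx : Pgood G x := by
    refine ⟨?_, ?_, ?_, ?_⟩
    · intro i j hij
      have h1 := hα.1 i j hij
      have h2 : (2*(s:ℝ)) ≤ (α i : ℝ) + (α j : ℝ) := by
        calc (2*(s:ℝ)) = ((2*s : ℕ) : ℝ) := by push_cast; ring
          _ ≤ ((α i + α j : ℕ) : ℝ) := by exact_mod_cast h1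
          _ = (α i : ℝ) + (α j : ℝ) := by push_cast; ring
      rw [hx]
      dsimp only
      rw [← add_div, le_div_iff₀ hn, one_mul]
      exact h2
    · intro i
      rw [hx]
      positivity
    · intro i
      rw [hx]
      dsimp only
      rw [div_le_one hn]
      by_cases hi : 0 < α i
      · exact hcast i hi
      · have : α i = 0 := by omega
        rw [this]
        simp
        try linarith
    · intro i hpos
      have hi : 0 < α i := by
        by_contra h
        have hz : α i = 0 := by omega
        rw [hx] at hpos
        dsimp only at hpos
        rw [hz] at hpos
        simp at hpos
      obtain ⟨k, hk, he⟩ := htight i hi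
      refine ⟨k, hk, ?_⟩
      rw [hx]
      dsimp only
      rw [← add_div, div_eq_one_iff_eq (ne_of_gt hn)]
      calc (α i : ℝ) + (α k : ℝ) = ((α i + α k : ℕ) : ℝ) := by push_cast; ring
        _ = ((2*s : ℕ) : ℝ) := by rw [he]
        _ = 2*(s:ℝ) := by push_cast; ring
  have hsum := key G hδub (Mnum G x) x (le_refl _) hPx
  calc ∑ i, (α i:ℝ) = ∑ i, (2*(s:ℝ)) * x i := by
        refine Finset.sum_congr rfl fun i _ => ?_
        rw [hx]
        dsimp only
        field_simp
    _ = (2*(s:ℝ)) * ∑ i, x i := (Finset.mul_sum _ _ _).symm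
    _ ≤ (2*(s:ℝ)) * δ := mul_le_mul_of_nonneg_left hsum (le_of_lt hn)
    _ = 2 * (s:ℝ) * δ := by ring

lemma exists_max_gen {δ : ℝ} (hiso : ∀ i, ∃ j, G.Adj i j)
    (hδmem : δ ∈ {x : ℝ | ∃ v ∈ Set.extremePoints ℝ (SPgraph G), x = ∑ i, v i})
    {s : ℕ} (hs : 1 ≤ s) :
    ∃ α : Fin r → ℕ, isMinGenSymbCover G (2*s) α ∧ ∑ i, (α i : ℝ) = 2 * (s:ℝ) * δ := by
  classical
  obtain ⟨v, hvext, hvsum⟩ := hδmem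
  have hPv : Pgood G v := pgood_of_extreme G hiso hvext
  have hhalf : ∀ i, v i = 0 ∨ v i = 1/2 ∨ v i = 1 := by
    by_contra hcon
    obtain ⟨i, hi⟩ := not_forall.mp hcon
    obtain ⟨y, z, hPy, hPz, -, -, hseg, hyne, -⟩ := step1 G hPv ⟨i, hi⟩
    obtain ⟨hvSP, hE⟩ := mem_extremePoints.mp hvext
    exact hyne ((hE y (pgood_mem_SP G hPy) z (pgood_mem_SP G hPz) hseg).1)
  set α : Fin r → ℕ := fun i => if v i = 1 then 2*s else if v i = 1/2 then s else 0 with hα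
  have hcast : ∀ i, (α i : ℝ) = 2*(s:ℝ) * v i := by
    intro i
    rcases hhalf i with h | h | h
    · have h1 : ¬(v i = 1) := by rw [h]; norm_num
      have h2 : ¬(v i = 1/2) := by rw [h]; norm_num
      rw [hα]
      dsimp only
      rw [if_neg h1, if_neg h2, h]
      norm_num
    · have h1 : ¬(v i = 1) := by rw [h]; norm_num
      rw [hα]
      dsimp only
      rw [if_neg h1, if_pos h, h]
      push_cast
      ring
    · rw [hα]
      dsimp only
      rw [if_pos h, h]
      push_cast
      ring
  have hvpos : ∀ i, 0 < α i → 0 < v i := by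
    intro i hi
    rcases hhalf i with h | h | h
    · exfalso
      have : (α i : ℝ) = 0 := by rw [hcast i, h]; ring
      have : α i = 0 := by exact_mod_cast this
      omega
    · rw [h]; norm_num
    · rw [h]; norm_num
  have hmem : memSymbCover G (2*s) α := by
    intro i j hij
    have h1 := hPv.1 i j hij
    have h2 : ((2*s : ℕ) : ℝ) ≤ ((α i + α j : ℕ) : ℝ) := by
      push_cast
      rw [hcast i, hcast j]
      nlinarith
    exact_mod_cast h2
  have htight : ∀ i, 0 < α i → ∃ k, G.Adj i k ∧ α i + α k = 2*s := by
    intro i hi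
    obtain ⟨k, hk, ht⟩ := hPv.2.2.2 i (hvpos i hi)
    refine ⟨k, hk, ?_⟩
    have : ((α i + α k : ℕ) : ℝ) = ((2*s : ℕ) : ℝ) := by
      push_cast
      rw [hcast i, hcast k]
      nlinarith
    exact_mod_cast this
  refine ⟨α, ⟨hmem, ?_⟩, ?_⟩
  · intro β hle hne hmemβ
    obtain ⟨i, hi⟩ := Function.ne_iff.mp hne
    have hlt : β i < α i := lt_of_le_of_ne (hle i) hi
    obtain ⟨k, hk, ht⟩ := htight i (by omega)
    have hmk := hmemβ i k hk
    have hbk : β k ≤ α k := hle k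
    omega
  · calc ∑ i, (α i : ℝ) = ∑ i, 2*(s:ℝ) * v i := Finset.sum_congr rfl (fun i _ => hcast i)
      _ = 2*(s:ℝ) * ∑ i, v i := (Finset.mul_sum _ _ _).symm
      _ = 2*(s:ℝ) * δ := by rw [← hvsum]

end CoverProof


/-- for a graph `G` on `[r]` with no isolated vertex and `J = J(G)`,
the maximal generating degree of `J⁽²ˢ⁾` equals `2s·δ(J)` for all `s ≥ 1`, where
`δ(J)` is the maximal coordinate sum of a vertex of `SP(G)`. -/
theorem maxGenDegree_even_symbolic_power_cover
    {r : ℕ} (G : SimpleGraph (Fin r))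
    (hiso : ∀ i, ∃ j, G.Adj i j)
    (δ : ℝ)
    (hδ : IsGreatest {x : ℝ | ∃ v ∈ Set.extremePoints ℝ (SPgraph G), x = ∑ i, v i} δ)
    (s : ℕ) (hs : 1 ≤ s) :
    IsGreatest {x : ℝ | ∃ α : Fin r → ℕ,
        isMinGenSymbCover G (2 * s) α ∧ x = ∑ i, (α i : ℝ)}
      (2 * s * δ) := by
  have hδub : ∀ v ∈ Set.extremePoints ℝ (SPgraph G), ∑ i, v i ≤ δ := fun v hv =>
    hδ.2 ⟨v, hv, rfl⟩
  constructor
  · obtain ⟨α, hα, hsum⟩ := CoverProof.exists_max_gen G hiso hδ.1 hs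
    refine ⟨α, hα, ?_⟩
    rw [hsum]
  · rintro xv ⟨α, hα, rfl⟩
    have h := CoverProof.upper G hδub hs hα
    calc ∑ i, (α i : ℝ) ≤ 2 * (s:ℝ) * δ := h
      _ = 2 * s * δ := by push_cast; ring
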